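/- A loop (L,·) with the left inverse property that is a σ-generalized right Bol loop is a σ-M-loop. -/
import Mathlib


/-- A loop: a quasigroup with two-sided identity. -/
class MyLoop (L : Type*) extends Mul L, One L where
  one_mul : ∀ a : L, 1 * a = a
  mul_one : ∀ a : L, a * 1 = a
  ldiv : L → L → L
  rdiv : L → L → L
  mul_ldiv : ∀ a b : L, a * ldiv a b = b
  ldiv_mul : ∀ a b : L, ldiv a (a * b) = b
  rdiv_mul : ∀ a b : L, rdiv a b * b = a
  mul_rdiv : ∀ a b : L, rdiv (a * b) b = a

namespace MyLoop

variable {L : Type*} [MyLoop L]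

/-- right inverse: `x * rho x = 1` -/
def rho (x : L) : L := ldiv x 1

/-- left inverse: `lam x * x = 1` -/
def lam (x : L) : L := rdiv 1 x

/-- right translation `R_a : y ↦ y * a`, as a bijection -/
def Rt (a : L) : Equiv.Perm L :=
  ⟨fun y => y * a, fun y => rdiv y a, fun y => mul_rdiv y a, fun y => rdiv_mul y a⟩

/-- left translation `L_a : y ↦ a * y`, as a bijection -/
def Lt (a : L) : Equiv.Perm L :=
  ⟨fun y => a * y, fun y => ldiv a y, fun y => ldiv_mul a y, fun y => mul_ldiv a y⟩

/-- σ-generalized (right) Bol loop identity -/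
def GBol (σ : L → L) : Prop := ∀ x y z : L, ((x * y) * z) * σ y = x * ((y * z) * σ y)

/-- σ-generalized left Bol loop identity -/
def LBol (σ : L → L) : Prop := ∀ x y z : L, σ y * (z * (y * x)) = (σ y * (z * y)) * x

/-- σ-M-loop identity -/
def MLoopP (σ : L → L) : Prop := ∀ x y z : L, (x * y) * (z * σ x) = (x * (y * z)) * σ x

/-- right inverse property -/
def RIP (L : Type*) [MyLoop L] : Prop := ∀ x y : L, (y * x) * rho x = y

/-- left inverse property -/
def LIP (L : Type*) [MyLoop L] : Prop := ∀ x y : L, lam x * (x * y) = y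

/-- right nucleus -/
def Nrho (L : Type*) [MyLoop L] : Set L := {a | ∀ y z : L, (z * y) * a = z * (y * a)}

/-- middle nucleus -/
def Nmu (L : Type*) [MyLoop L] : Set L := {a | ∀ y z : L, (z * a) * y = z * (a * y)}

/-- multiplication of the A-holomorph `H = A × L`, `(α,x)∘(β,y) = (αβ, xβ · y)` -/
def hmul (A : Subgroup (MulAut L)) (p q : ↥A × L) : ↥A × L :=
  (p.1 * q.1, (q.1 : MulAut L) p.2 * q.2)

/-- the right inverse of an element of the holomorph -/
def hrho (A : Subgroup (MulAut L)) (p : ↥A × L) : ↥A × L :=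
  (p.1⁻¹, rho ((p.1⁻¹ : MulAut L) p.2))

/-- the holomorph is a σ'-generalized Bol loop, where `σ'(α,x) = (α, σ x)` -/
def HGBol (A : Subgroup (MulAut L)) (σ : L → L) : Prop :=
  ∀ p q r : ↥A × L,
    hmul A (hmul A (hmul A p q) r) (q.1, σ q.2) =
      hmul A p (hmul A (hmul A q r) (q.1, σ q.2))

end MyLoop

open MyLoop

section AuxLemmas
variable {L : Type*} [MyLoop L] (σ : L → L)

lemma my_lam_mul (x : L) : lam x * x = 1 := rdiv_mul 1 x

lemma my_mul_lam (hlip : LIP L) (x : L) : x * lam x = 1 := by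
  have h1 : ldiv (lam x) (lam x * (x * lam x)) = x * lam x := ldiv_mul _ _
  rw [hlip x (lam x)] at h1
  have h2 := ldiv_mul (lam x) (1 : L)
  rw [MyLoop.mul_one] at h2
  rw [← h1, h2]

lemma my_lam_lam (hlip : LIP L) (x : L) : lam (lam x) = x := by
  show rdiv 1 (lam x) = x
  rw [← my_mul_lam hlip x]
  exact mul_rdiv x (lam x)

lemma my_rip (h : GBol σ) (t x : L) (hlip : LIP L) : (t * x) * lam x = t := by
  have key := h t x (lam x)
  rw [my_mul_lam hlip x, MyLoop.one_mul] at key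
  have := mul_rdiv ((t * x) * lam x) (σ x)
  rw [key, mul_rdiv t (σ x)] at this
  exact this.symm

lemma my_lam_mul_left (hlip : LIP L) (h : GBol σ) (x y : L) :
    lam (x * y) * x = lam y := by
  have h1 := hlip (x * y) (lam y)
  rwa [my_rip σ h x y hlip] at h1

end AuxLemmas

/-- a LIP loop that is a σ-generalized right Bol loop is a σ-M-loop. -/
theorem lip_gbol_mloop {L : Type*} [MyLoop L] (σ : L → L) (hlip : LIP L) (h : GBol σ) :
    MLoopP σ := by
  intro x y z
  have key := h (lam (x * y)) x (y * z)
  rw [my_lam_mul_left σ hlip h x y, hlip y z] at key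
  calc (x * y) * (z * σ x)
      = lam (lam (x * y)) * (lam (x * y) * ((x * (y * z)) * σ x)) := by
        rw [← key, my_lam_lam hlip]
    _ = (x * (y * z)) * σ x := hlip _ _
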